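/- Let H be a finite connected simple graph with maximum degree Δ(H) = d ≥ 5, let p ≥ 3 and q ≥ 3 be integers with p + q = d + 1, let R be a graph with minimum degree δ(R) ≥ p − 1, and let G = K_{q+1} minus an edge. Let 𝔉 denote the family of subsets S ⊆ V(H) such that H[S] is R-free and |S| is maximum among all subsets inducing an R-free subgraph. Choose S ∈ 𝔉 so that the number of copies of G in H[V(H) ∖ S] is minimum over 𝔉, and, subject to that, the number of edges of H[V(H) ∖ S] is minimum. Let G′ be a copy of G in H[V(H) ∖ S] with vertex set V′ = {v′₀, …, v′_q}, where B′ = {v′₀, …, v′_{q−2}} induces a complete graph K_{q−1} and every vertex of B′ is adjacent to both v′_{q−1} and v′_q, let v ∈ B′, and let R′ be the (unique) copy of R that is a connected component of H[S ∪ {v}] containing v. Then for every vertex y of R′ with y ≠ v, there is a copy of G in H[((V(H) ∖ S) ∖ {v}) ∪ {y}] containing y, and y has exactly q neighbors in (V(H) ∖ S) ∖ {v}. -/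

import Mathlib

open SimpleGraph

/-- The complete graph on `n` vertices minus one edge (the edge between vertices `0` and `1`). -/
def KsubE (n : ℕ) : SimpleGraph (Fin n) where
  Adj a b := a ≠ b ∧ a.val + b.val ≠ 1
  symm := by
    constructor
    intro a b h
    exact ⟨h.1.symm, by omega⟩
  loopless := by
    constructor
    intro a h
    exact h.1 rfl

/-- `H` contains a (not necessarily induced) subgraph isomorphic to `R`. -/
def Contains {α : Type*} {β : Type*} (H : SimpleGraph α) (R : SimpleGraph β) : Prop :=
  ∃ f : R →g H, Function.Injective f

/-- The number of copies (subgraphs isomorphic to) of `KsubE (q+1)` of `H` avoiding `W`,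
i.e. copies of `K_{q+1} ∖ e` in `H[V ∖ W]`. -/
noncomputable def copiesOffCount {V : Type} [Fintype V] [DecidableEq V]
    (H : SimpleGraph V) (q : ℕ) (W : Finset V) : ℕ :=
  {C : H.Subgraph | C.verts ⊆ (↑W : Set V)ᶜ ∧ Nonempty (C.coe ≃g KsubE (q + 1))}.ncard

/-- The number of edges of `H[V ∖ W]`. -/
noncomputable def edgesOffCount {V : Type} [Fintype V] [DecidableEq V]
    (H : SimpleGraph V) (W : Finset V) : ℕ :=
  (H.induce ((↑W : Set V)ᶜ)).edgeSet.ncard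


set_option linter.unusedSectionVars false
set_option maxHeartbeats 1000000

open Set

section Aux
variable {V : Type} [Fintype V] [DecidableEq V] {H : SimpleGraph V}

instance SG_finite : Finite H.Subgraph := by
  have hf : Function.Injective
      (fun D : H.Subgraph => (D.verts, {p : V × V | D.Adj p.1 p.2})) := by
    intro D1 D2 h
    rw [Prod.mk.injEq] at h
    ext x y
    · rw [h.1]
    · exact iff_of_eq (congrArg (fun (s : Set (V × V)) => (x, y) ∈ s) h.2)
  exact Finite.of_injective _ hf

/-- subgraph built from a graph hom -/
def homSG {γ : Type} (H : SimpleGraph V) (G₀ : SimpleGraph γ) (f : γ → V)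
    (hadj : ∀ {a b}, G₀.Adj a b → H.Adj (f a) (f b)) : H.Subgraph where
  verts := Set.range f
  Adj x y := ∃ a b, G₀.Adj a b ∧ f a = x ∧ f b = y
  adj_sub := by rintro _ _ ⟨a, b, h, rfl, rfl⟩; exact hadj h
  edge_vert := by rintro _ _ ⟨a, b, h, rfl, rfl⟩; exact ⟨a, rfl⟩
  symm := by constructor; rintro _ _ ⟨a, b, h, rfl, rfl⟩; exact ⟨b, a, h.symm, rfl, rfl⟩

lemma homSG_coe_iso {γ : Type} (G₀ : SimpleGraph γ) (f : γ → V)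
    (hadj : ∀ {a b}, G₀.Adj a b → H.Adj (f a) (f b)) (hf : Function.Injective f) :
    Nonempty ((homSG H G₀ f hadj).coe ≃g G₀) := by
  refine ⟨(RelIso.mk (Equiv.ofInjective f hf) ?_).symm⟩
  intro a b
  constructor
  · rintro ⟨a', b', h, ha, hb⟩
    have ha' : a' = a := hf ha
    have hb' : b' = b := hf hb
    rwa [ha', hb'] at h
  · intro h
    exact ⟨a, b, h, rfl, rfl⟩

lemma ncard_nbr {γ : Type} [Fintype γ] (G : SimpleGraph γ) [DecidableRel G.Adj] (x : γ) :
    (G.neighborSet x).ncard = G.degree x := by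
  rw [← card_neighborSet_eq_degree, ← Nat.card_coe_set_eq, Nat.card_eq_fintype_card]

lemma contains_of_forall_mem {γ : Type} {R : SimpleGraph γ} {A B : Set V}
    (f : R →g H.induce A) (hf : Function.Injective f) (h : ∀ b, (f b : V) ∈ B) :
    Contains (H.induce B) R := by
  refine ⟨⟨fun b => ⟨f b, h b⟩, ?_⟩, ?_⟩
  · intro a b hab
    exact f.map_adj hab
  · intro a b hab
    have hval := congrArg (Subtype.val (p := fun x => x ∈ B)) hab
    exact hf (Subtype.ext hval)


end Aux

section Aux2
variable {V : Type} [Fintype V] [DecidableEq V] {H : SimpleGraph V}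

/-- edges of `H` inside a vertex set `A`, as a set of `Sym2 V` -/
def edgeIn (H : SimpleGraph V) (A : Set V) : Set (Sym2 V) :=
  {e | e ∈ H.edgeSet ∧ ∀ u ∈ e, u ∈ A}

lemma induce_edge_ncard (H : SimpleGraph V) (A : Set V) :
    (H.induce A).edgeSet.ncard = (edgeIn H A).ncard := by
  have hinj : Function.Injective (Sym2.map (Subtype.val : A → V)) :=
    Sym2.map.injective Subtype.val_injective
  rw [← Set.ncard_image_of_injective _ hinj]
  congr 1
  ext e
  constructor
  · rintro ⟨e', he', rfl⟩
    induction e' with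
    | _ x y =>
      refine ⟨he', ?_⟩
      intro u hu
      rw [Sym2.map_pair_eq, Sym2.mem_iff] at hu
      rcases hu with rfl | rfl
      · exact x.2
      · exact y.2
  · rintro ⟨he, hmem⟩
    induction e with
    | _ x y =>
      have hx : x ∈ A := hmem x (by simp)
      have hy : y ∈ A := hmem y (by simp)
      refine ⟨s(⟨x, hx⟩, ⟨y, hy⟩), ?_, by simp⟩
      exact he

lemma edgeIn_split (H : SimpleGraph V) (A : Set V) (x : V) (hx : x ∈ A) :
    (edgeIn H A).ncard
      = (edgeIn H (A \ {x})).ncard + (H.neighborSet x ∩ (A \ {x})).ncard := by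
  have hsplit : edgeIn H A
      = edgeIn H (A \ {x}) ∪ (fun u => s(x, u)) '' (H.neighborSet x ∩ (A \ {x})) := by
    ext e
    induction e with
    | _ a b =>
      constructor
      · rintro ⟨he, hmem⟩
        by_cases hxa : x = a
        · subst hxa
          right
          have hb : b ∈ A := hmem b (by simp)
          have hadj : H.Adj x b := he
          exact ⟨b, ⟨hadj, hb, fun hb' => H.irrefl (hb' ▸ hadj)⟩, rfl⟩
        · by_cases hxb : x = b
          · subst hxb
            right
            have ha : a ∈ A := hmem a (by simp)
            have hadj : H.Adj x a := H.adj_symm he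
            exact ⟨a, ⟨hadj, ha, fun ha' => H.irrefl (ha' ▸ hadj)⟩, Sym2.eq_swap⟩
          · left
            refine ⟨he, ?_⟩
            intro u hu
            rw [Sym2.mem_iff] at hu
            rcases hu with rfl | rfl
            · exact ⟨hmem u (by simp), fun h => hxa (by simpa using h.symm)⟩
            · exact ⟨hmem u (by simp), fun h => hxb (by simpa using h.symm)⟩
      · rintro (⟨he, hmem⟩ | ⟨u, ⟨hadj, huA, hune⟩, hes⟩)
        · exact ⟨he, fun u hu => (hmem u hu).1⟩
        · rw [← hes]
          refine ⟨hadj, ?_⟩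
          intro c hc
          rw [Sym2.mem_iff] at hc
          rcases hc with rfl | rfl
          · exact hx
          · exact huA
  have hdisj : Disjoint (edgeIn H (A \ {x}))
      ((fun u => s(x, u)) '' (H.neighborSet x ∩ (A \ {x}))) := by
    rw [Set.disjoint_left]
    rintro e ⟨_, hmem⟩ ⟨u, _, rfl⟩
    have : x ∈ A \ {x} := hmem x (by simp)
    simp at this
  have hinj : InjOn (fun u => s(x, u)) (H.neighborSet x ∩ (A \ {x})) := by
    rintro u ⟨_, _, (hu : u ≠ x)⟩ u' ⟨_, _, (hu' : u' ≠ x)⟩ h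
    simp only [Sym2.eq, Sym2.rel_iff', Prod.mk.injEq, Prod.swap_prod_mk] at h
    rcases h with ⟨-, h⟩ | ⟨h1, h2⟩
    · exact h
    · exact absurd h1.symm hu'
  rw [hsplit, Set.ncard_union_eq hdisj (Set.toFinite _) (Set.toFinite _),
    Set.ncard_image_of_injOn hinj]

end Aux2

theorem statement12 {V : Type} [Fintype V] [DecidableEq V]
    (H : SimpleGraph V) [DecidableRel H.Adj]
    (hconn : H.Connected) (d : ℕ) (hd : H.maxDegree = d) (hd5 : 5 ≤ d)
    (p q : ℕ) (hp : 3 ≤ p) (hq : 3 ≤ q) (hpq : p + q = d + 1)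
    {β : Type} [Fintype β] (R : SimpleGraph β) [DecidableRel R.Adj]
    (hδR : p - 1 ≤ R.minDegree)
    -- `S` belongs to `𝔉` : `H[S]` is `R`-free and `|S|` is maximum
    (S : Finset V)
    (hSfree : ¬ Contains (H.induce (S : Set V)) R)
    (hSmax : ∀ W : Finset V, ¬ Contains (H.induce (W : Set V)) R → W.card ≤ S.card)
    -- among members of `𝔉`, `S` minimizes the number of copies of `G = K_{q+1} ∖ e`
    -- in `H[V ∖ S]`
    (hminCopies : ∀ W : Finset V, ¬ Contains (H.induce (W : Set V)) R →
      W.card = S.card → copiesOffCount H q S ≤ copiesOffCount H q W)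
    -- and, subject to that, minimizes the number of edges of `H[V ∖ S]`
    (hminEdges : ∀ W : Finset V, ¬ Contains (H.induce (W : Set V)) R →
      W.card = S.card → copiesOffCount H q W = copiesOffCount H q S →
      edgesOffCount H S ≤ edgesOffCount H W)
    -- `G′` is a copy of `G` in `H[V ∖ S]` with vertices `w 0, …, w q`, where
    -- `B′ = {w 0, …, w (q-2)}` induces a complete graph and each of its vertices is
    -- adjacent to both `w (q-1)` and `w q`
    (w : Fin (q + 1) → V) (hwinj : Function.Injective w)
    (hwS : ∀ i, w i ∉ S)
    (hB : ∀ i j : Fin (q + 1), (i : ℕ) ≤ q - 2 → (j : ℕ) ≤ q - 2 → i ≠ j →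
      H.Adj (w i) (w j))
    (hB' : ∀ i : Fin (q + 1), (i : ℕ) ≤ q - 2 →
      H.Adj (w i) (w ⟨q - 1, by omega⟩) ∧ H.Adj (w i) (w ⟨q, by omega⟩))
    -- `v = w i` is a vertex of `B′`
    (i : Fin (q + 1)) (hi : (i : ℕ) ≤ q - 2)
    -- `C` is the vertex set of the connected component of `H[S ∪ {v}]` containing `v`,
    -- and this component (the copy `R′`) is isomorphic to `R`
    (C : Set V)
    (hcomp : ∀ x : V, x ∈ C ↔ ∃ hx : x ∈ (↑(insert (w i) S) : Set V),
      (H.induce (↑(insert (w i) S) : Set V)).Reachable ⟨w i, by simp⟩ ⟨x, hx⟩)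
    (hiso : Nonempty (H.induce C ≃g R)) :
    -- then every vertex `y ≠ v` of `R′` lies in a copy of `G` in
    -- `H[((V ∖ S) ∖ {v}) ∪ {y}]`, and `y` has exactly `q` neighbors in `(V ∖ S) ∖ {v}`
    ∀ y ∈ C, y ≠ w i →
      (∃ C' : H.Subgraph,
        C'.verts ⊆ ((↑S : Set V)ᶜ \ {w i}) ∪ {y} ∧ y ∈ C'.verts ∧
        Nonempty (C'.coe ≃g KsubE (q + 1))) ∧
      (H.neighborSet y ∩ ((↑S : Set V)ᶜ \ {w i})).ncard = q := by
  classical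
  intro y hyC hyne
  have hviS : w i ∉ S := hwS i
  have hCsub : ∀ x ∈ C, x = w i ∨ x ∈ S := by
    intro x hx
    obtain ⟨hx', -⟩ := (hcomp x).1 hx
    simpa using hx'
  have hyS : y ∈ S := (hCsub y hyC).resolve_left hyne
  have hvC : w i ∈ C := (hcomp (w i)).2 ⟨by simp, Reachable.refl _⟩
  set S' : Finset V := insert (w i) (S.erase y) with hS'def
  have hS'card : S'.card = S.card := by
    rw [Finset.card_insert_of_notMem (by simp [hviS]), Finset.card_erase_of_mem hyS]
    have : 0 < S.card := Finset.card_pos.mpr ⟨y, hyS⟩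
    omega
  have hyS' : y ∉ (↑S' : Set V) := by simp [hS'def, hyne]
  have hS'c : ((↑S' : Set V))ᶜ = (((↑S : Set V))ᶜ \ {w i}) ∪ {y} := by
    ext x
    simp only [hS'def, Finset.coe_insert, Set.mem_compl_iff, Set.mem_insert_iff,
      Finset.coe_erase, Set.mem_diff, Set.mem_union, Set.mem_singleton_iff, Finset.mem_coe,
      not_or]
    constructor
    · rintro ⟨h1, h2⟩
      by_cases hxy : x = y
      · exact Or.inr hxy
      · exact Or.inl ⟨fun hxS => h2 ⟨hxS, hxy⟩, h1⟩
    · rintro (⟨h1, h2⟩ | rfl)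
      · exact ⟨h2, fun h => h1 h.1⟩
      · exact ⟨hyne, fun h => h.2 rfl⟩
  have hS'cy : ((↑S' : Set V))ᶜ \ {y} = ((↑S : Set V))ᶜ \ {w i} := by
    rw [hS'c]
    ext x
    simp only [Set.mem_diff, Set.mem_union, Set.mem_singleton_iff, Set.mem_compl_iff,
      Finset.mem_coe]
    constructor
    · rintro ⟨h1 | rfl, h2⟩
      · exact h1
      · exact absurd rfl h2
    · rintro ⟨h1, h2⟩
      exact ⟨Or.inl ⟨h1, h2⟩, fun hxy => h1 (hxy ▸ hyS)⟩
  -- connectivity of the component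
  set T : Set V := (↑(insert (w i) S) : Set V) with hTdef
  have key : ∀ (s t : ↥T) (wk : (H.induce T).Walk s t) (hs : (s : V) ∈ C),
      ∃ ht : (t : V) ∈ C, (H.induce C).Reachable ⟨(s : V), hs⟩ ⟨(t : V), ht⟩ := by
    intro s t wk
    induction wk with
    | nil => intro hs; exact ⟨hs, Reachable.refl _⟩
    | @cons s b t hadj p ih =>
      intro hs
      have hb : (b : V) ∈ C := by
        obtain ⟨hm, hr⟩ := (hcomp (s : V)).1 hs
        refine (hcomp (b : V)).2 ⟨b.2, ?_⟩
        exact Reachable.trans hr (Adj.reachable hadj)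
      obtain ⟨ht, hr2⟩ := ih hb
      have hadjC : (H.induce C).Adj ⟨(s : V), hs⟩ ⟨(b : V), hb⟩ := hadj
      exact ⟨ht, (hadjC.reachable).trans hr2⟩
  have hCconn : (H.induce C).Connected := by
    haveI : Nonempty ↥C := ⟨⟨w i, hvC⟩⟩
    refine ⟨fun x₁ x₂ => ?_⟩
    obtain ⟨hm1, hr1⟩ := (hcomp (x₁ : V)).1 x₁.2
    obtain ⟨hm2, hr2⟩ := (hcomp (x₂ : V)).1 x₂.2
    obtain ⟨wk1⟩ := hr1
    obtain ⟨wk2⟩ := hr2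
    obtain ⟨h1, r1⟩ := key _ _ wk1 hvC
    obtain ⟨h2, r2⟩ := key _ _ wk2 hvC
    exact r1.symm.trans r2
  have hRconn : R.Connected := by
    obtain ⟨φ⟩ := hiso
    exact Connected.map φ.toHom φ.toEquiv.surjective hCconn
  have hcardβ : C.ncard = Nat.card β := by
    obtain ⟨φ⟩ := hiso
    rw [← Nat.card_coe_set_eq]
    exact Nat.card_congr φ.toEquiv
  have hS'free : ¬ Contains (H.induce (↑S' : Set V)) R := by
    rintro ⟨f, hfinj⟩
    by_cases hcase : ∀ b, (↑(f b) : V) ≠ w i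
    · apply hSfree
      refine contains_of_forall_mem f hfinj ?_
      intro b
      have hb := (f b).2
      simp only [hS'def, Finset.coe_insert, Set.mem_insert_iff, Finset.coe_erase,
        Set.mem_diff, Finset.mem_coe] at hb
      rcases hb with hb | hb
      · exact absurd hb (hcase b)
      · exact hb.1
    · push_neg at hcase
      obtain ⟨b₀, hb₀⟩ := hcase
      have hsub : (↑S' : Set V) ⊆ T := by
        intro x hx
        rw [hTdef]
        simp only [Finset.coe_insert, Set.mem_insert_iff, Finset.mem_coe]
        simp only [hS'def, Finset.coe_insert, Set.mem_insert_iff, Finset.coe_erase,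
          Set.mem_diff, Finset.mem_coe] at hx
        tauto
      let ι : H.induce (↑S' : Set V) →g H.induce T :=
        ⟨fun x => ⟨(x : V), hsub x.2⟩, fun hadj => hadj⟩
      have hall : ∀ b, (↑(f b) : V) ∈ C := by
        intro b
        have hreach : R.Reachable b₀ b := hRconn.preconnected b₀ b
        have h2 : (H.induce (↑S' : Set V)).Reachable (f b₀) (f b) := hreach.map f
        have h3 : (H.induce T).Reachable (ι (f b₀)) (ι (f b)) := h2.map ι
        refine (hcomp _).2 ⟨hsub (f b).2, ?_⟩
        have hTmemwi : w i ∈ T := by rw [hTdef]; simp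
        have he : (⟨w i, hTmemwi⟩ : ↥T) = ι (f b₀) := Subtype.ext hb₀.symm
        rw [he]
        exact h3
      have hle : Nat.card β ≤ (C \ {y}).ncard := by
        refine le_trans ?_ (Set.ncard_le_ncard_of_injOn (s := (Set.univ : Set β))
          (fun b => (↑(f b) : V)) ?_ ?_ (Set.toFinite _))
        · rw [Set.ncard_univ]
        · intro b _
          refine ⟨hall b, ?_⟩
          intro hby
          exact hyS' (hby ▸ (f b).2)
        · intro b _ b' _ hbb
          exact hfinj (Subtype.ext hbb)
      have h6 : (C \ {y}).ncard = C.ncard - 1 :=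
        Set.ncard_diff_singleton_of_mem hyC
      have h7 : 0 < C.ncard := (Set.ncard_pos (Set.toFinite _)).2 ⟨y, hyC⟩
      omega
  -- counting copies
  set P : Finset V → Set H.Subgraph := fun W =>
    {D | D.verts ⊆ (↑W : Set V)ᶜ ∧ Nonempty (D.coe ≃g KsubE (q + 1))} with hPdef
  set 𝒜 : Set H.Subgraph :=
    {D | D.verts ⊆ ((↑S : Set V)ᶜ \ {w i}) ∧ Nonempty (D.coe ≃g KsubE (q + 1))} with h𝒜def
  set Vs : Set H.Subgraph := {D | D ∈ P S ∧ w i ∈ D.verts} with hVsdef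
  set Ys : Set H.Subgraph := {D | D ∈ P S' ∧ y ∈ D.verts} with hYsdef
  have hcopiesP : ∀ W : Finset V, copiesOffCount H q W = (P W).ncard := fun _ => rfl
  have hsplitS : copiesOffCount H q S = 𝒜.ncard + Vs.ncard := by
    rw [hcopiesP]
    have hPeq : P S = 𝒜 ∪ Vs := by
      ext D
      constructor
      · intro hD
        by_cases hv : w i ∈ D.verts
        · exact Or.inr ⟨hD, hv⟩
        · exact Or.inl ⟨fun x hx => ⟨hD.1 hx, fun hxx => hv (hxx ▸ hx)⟩, hD.2⟩
      · rintro (⟨h1, h2⟩ | ⟨hD, -⟩)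
        · exact ⟨fun x hx => (h1 hx).1, h2⟩
        · exact hD
    have hdisj : Disjoint 𝒜 Vs := by
      rw [Set.disjoint_left]
      rintro D ⟨h1, -⟩ ⟨-, hv⟩
      exact (h1 hv).2 rfl
    rw [hPeq, Set.ncard_union_eq hdisj (Set.toFinite _) (Set.toFinite _)]
  have hsplitS' : copiesOffCount H q S' = 𝒜.ncard + Ys.ncard := by
    rw [hcopiesP]
    have hPeq : P S' = 𝒜 ∪ Ys := by
      ext D
      constructor
      · intro hD
        by_cases hv : y ∈ D.verts
        · exact Or.inr ⟨hD, hv⟩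
        · refine Or.inl ⟨?_, hD.2⟩
          intro x hx
          rw [← hS'cy]
          exact ⟨hD.1 hx, fun hxx => hv (hxx ▸ hx)⟩
      · rintro (⟨h1, h2⟩ | ⟨hD, -⟩)
        · refine ⟨fun x hx => ?_, h2⟩
          have := h1 hx
          rw [← hS'cy] at this
          exact this.1
        · exact hD
    have hdisj : Disjoint 𝒜 Ys := by
      rw [Set.disjoint_left]
      rintro D ⟨h1, -⟩ ⟨-, hv⟩
      exact (h1 hv).1 hyS
    rw [hPeq, Set.ncard_union_eq hdisj (Set.toFinite _) (Set.toFinite _)]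
  have hmin : copiesOffCount H q S ≤ copiesOffCount H q S' := hminCopies S' hS'free hS'card
  rw [hsplitS, hsplitS'] at hmin
  have hVY : Vs.ncard ≤ Ys.ncard := by omega
  -- the copy G' belongs to Vs
  have hD₀ : ∃ D₀, D₀ ∈ Vs := by
    obtain ⟨σ, hσexp⟩ : ∃ σ : Fin (q+1) → Fin (q+1), ∀ k : Fin (q+1),
        ((k : ℕ) = 0 ∧ (σ k : ℕ) = q - 1) ∨ ((k : ℕ) = 1 ∧ (σ k : ℕ) = q) ∨
          (2 ≤ (k : ℕ) ∧ (σ k : ℕ) = (k : ℕ) - 2) := by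
      refine ⟨fun j => ⟨((j : ℕ) + q - 1) % (q+1), Nat.mod_lt _ (by omega)⟩, ?_⟩
      intro k
      have hk := k.isLt
      have hval : ((((k : ℕ) + q - 1) % (q+1) : ℕ)) = ((k : ℕ) + q - 1) % (q+1) := rfl
      rcases Nat.lt_or_ge (k : ℕ) 2 with h2 | h2
      · rcases Nat.lt_or_ge (k : ℕ) 1 with h1 | h1
        · left
          refine ⟨by omega, ?_⟩
          show ((k : ℕ) + q - 1) % (q+1) = q - 1
          have h0 : (k : ℕ) = 0 := by omega
          rw [h0]
          simpa using Nat.mod_eq_of_lt (show q - 1 < q + 1 by omega)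
        · right; left
          refine ⟨by omega, ?_⟩
          show ((k : ℕ) + q - 1) % (q+1) = q
          have h0 : (k : ℕ) = 1 := by omega
          rw [h0]
          simpa using Nat.mod_eq_of_lt (show q < q + 1 by omega)
      · right; right
        refine ⟨h2, ?_⟩
        show ((k : ℕ) + q - 1) % (q+1) = (k : ℕ) - 2
        have heq : (k : ℕ) + q - 1 = ((k : ℕ) - 2) + 1*(q+1) := by omega
        rw [heq, Nat.add_mul_mod_self_right]
        exact Nat.mod_eq_of_lt (by omega)
    have hσinj : Function.Injective σ := by
      intro a b h
      have hval := congrArg Fin.val h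
      have ha := a.isLt
      have hb := b.isLt
      have hσa := hσexp a
      have hσb := hσexp b
      apply Fin.ext
      omega
    have hBval : ∀ (k l : Fin (q+1)), (k : ℕ) ≤ q - 2 →
        ((l : ℕ) = q - 1 ∨ (l : ℕ) = q) → H.Adj (w k) (w l) := by
      intro k l hk hl
      rcases hl with hl | hl
      · have hleq : l = ⟨q - 1, by omega⟩ := Fin.ext hl
        rw [hleq]
        exact (hB' k hk).1
      · have hleq : l = ⟨q, by omega⟩ := Fin.ext hl
        rw [hleq]
        exact (hB' k hk).2
    have hσadj : ∀ {a b : Fin (q+1)}, (KsubE (q+1)).Adj a b → H.Adj (w (σ a)) (w (σ b)) := by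
      intro a b hab
      obtain ⟨hne, hsum⟩ := hab
      have hvne : (a : ℕ) ≠ (b : ℕ) := fun h => hne (Fin.ext h)
      have hia := a.isLt
      have hib := b.isLt
      have hσa := hσexp a
      have hσb := hσexp b
      rcases Nat.lt_or_ge (a : ℕ) 2 with ha | ha <;>
        rcases Nat.lt_or_ge (b : ℕ) 2 with hb | hb
      · omega
      · exact (hBval (σ b) (σ a) (by omega) (by omega)).symm
      · exact hBval (σ a) (σ b) (by omega) (by omega)
      · exact hB (σ a) (σ b) (by omega) (by omega) (fun h => hne (hσinj h))
    refine ⟨homSG H (KsubE (q+1)) (w ∘ σ) (fun hab => hσadj hab),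
      ⟨⟨?_, homSG_coe_iso _ _ _ (hwinj.comp hσinj)⟩, ?_⟩⟩
    · rintro x ⟨j, rfl⟩
      exact hwS _
    · have hij : (i : ℕ) + 2 < q + 1 := by omega
      have hj₀ := hσexp ⟨(i : ℕ) + 2, hij⟩
      have hj₀v : ((⟨(i : ℕ) + 2, hij⟩ : Fin (q+1)) : ℕ) = (i : ℕ) + 2 := rfl
      refine ⟨⟨(i : ℕ) + 2, hij⟩, ?_⟩
      show w (σ _) = w i
      congr 1
      apply Fin.ext
      omega
  have hVne : 0 < Vs.ncard := by
    obtain ⟨D₀, h⟩ := hD₀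
    exact (Set.ncard_pos (Set.toFinite _)).2 ⟨D₀, h⟩
  have hYne : Ys.Nonempty := by
    rw [← Set.ncard_pos (Set.toFinite _)]
    omega
  obtain ⟨D₁, hD₁⟩ := hYne
  refine ⟨⟨D₁, ?_, hD₁.2, hD₁.1.2⟩, ?_⟩
  · rw [← hS'c]
    exact hD₁.1.1
  -- Part 2 : the neighbor count
  set N : Set V := H.neighborSet y ∩ ((↑S : Set V)ᶜ \ {w i}) with hNdef
  have hpC : p - 1 ≤ (H.neighborSet y ∩ C).ncard := by
    obtain ⟨φ⟩ := hiso
    have hmd : p - 1 ≤ R.degree (φ ⟨y, hyC⟩) := le_trans hδR (R.minDegree_le_degree _)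
    have hdeg : R.degree (φ ⟨y, hyC⟩) = (R.neighborSet (φ ⟨y, hyC⟩)).ncard := (ncard_nbr R _).symm
    rw [hdeg] at hmd
    refine le_trans hmd ?_
    refine Set.ncard_le_ncard_of_injOn (fun c => ((φ.symm c : ↥C) : V)) ?_ ?_ (Set.toFinite _)
    · intro c hc
      have hadj : (H.induce C).Adj ⟨y, hyC⟩ (φ.symm c) := by
        have h2 := φ.symm.map_rel_iff.mpr hc
        rwa [RelIso.symm_apply_apply] at h2
      exact ⟨hadj, (φ.symm c).2⟩
    · intro c _ c' _ h
      exact φ.symm.toEquiv.injective (Subtype.ext h)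
  have hdisjNC : Disjoint N (H.neighborSet y ∩ C) := by
    rw [Set.disjoint_left]
    rintro x ⟨-, hx2⟩ ⟨-, hxC⟩
    rcases hCsub x hxC with rfl | hxS
    · exact hx2.2 rfl
    · exact hx2.1 hxS
  have hUB : N.ncard + (p - 1) ≤ d := by
    have hsub : N ∪ (H.neighborSet y ∩ C) ⊆ H.neighborSet y := by
      rintro x (hx | hx) <;> exact hx.1
    have hle := Set.ncard_le_ncard hsub (Set.toFinite _)
    rw [Set.ncard_union_eq hdisjNC (Set.toFinite _) (Set.toFinite _)] at hle
    have hdle : H.degree y ≤ d := hd ▸ H.degree_le_maxDegree y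
    have hny := ncard_nbr H y
    omega
  have hNq : N.ncard ≤ q := by omega
  by_contra hne
  have hNlt : N.ncard ≤ q - 1 := by omega
  have hstruct : ∀ D : H.Subgraph, D.verts ⊆ ((↑S' : Set V))ᶜ →
      Nonempty (D.coe ≃g KsubE (q+1)) → y ∈ D.verts →
      ∃ z, ((z ∈ ((↑S : Set V)ᶜ \ {w i})) ∧ z ∉ N ∧ z ≠ y ∧ ∀ u ∈ N, H.Adj z u) ∧
        D.verts = insert y (insert z N) ∧
        (∀ u1 ∈ N, ∀ u2 ∈ N, u1 ≠ u2 → H.Adj u1 u2) ∧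
        (q - 1 ≤ N.ncard) ∧
        (∀ x x', D.Adj x x' ↔ x ∈ D.verts ∧ x' ∈ D.verts ∧ x ≠ x' ∧
          ¬(x = y ∧ x' = z) ∧ ¬(x = z ∧ x' = y)) := by
    intro D hsub hisoD hyD
    obtain ⟨e⟩ := hisoD
    set ψ : Fin (q+1) → V := fun j => ((e.symm j : ↥D.verts) : V) with hψdef
    have hψinj : Function.Injective ψ := by
      intro a b h
      exact e.symm.toEquiv.injective (Subtype.ext h)
    have hψmem : ∀ j, ψ j ∈ D.verts := fun j => (e.symm j).2
    have hψadj : ∀ j k, D.Adj (ψ j) (ψ k) ↔ (j ≠ k ∧ (j : ℕ) + (k : ℕ) ≠ 1) := by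
      intro j k
      have h2 : D.coe.Adj (e.symm j) (e.symm k) ↔ (KsubE (q+1)).Adj j k := e.symm.map_rel_iff
      exact h2
    have hrange : D.verts = Set.range ψ := by
      ext x
      constructor
      · intro hx
        refine ⟨e ⟨x, hx⟩, ?_⟩
        show ((e.symm (e ⟨x, hx⟩) : ↥D.verts) : V) = x
        rw [RelIso.symm_apply_apply]
      · rintro ⟨j, rfl⟩
        exact hψmem j
    obtain ⟨a, ha⟩ : ∃ a, ψ a = y := by
      have hy2 := hyD
      rw [hrange] at hy2
      exact hy2
    have hysub' : ∀ k : Fin (q+1), k ≠ a → ψ k ∈ ((↑S : Set V)ᶜ \ {w i}) := by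
      intro k hk
      have h1 : ψ k ∈ ((↑S' : Set V))ᶜ := hsub (hψmem k)
      have h2 : ψ k ≠ y := fun h => hk (hψinj (by rw [h, ← ha]))
      rw [← hS'cy]
      exact ⟨h1, h2⟩
    have hkN : ∀ k : Fin (q+1), k ≠ a → ((a : ℕ) + (k : ℕ) ≠ 1) → ψ k ∈ N := by
      intro k hk hsum
      have hadj : D.Adj (ψ a) (ψ k) := (hψadj a k).2 ⟨fun h => hk h.symm, hsum⟩
      have hHadj : H.Adj y (ψ k) := by
        rw [← ha]
        exact D.adj_sub hadj
      rw [hNdef]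
      exact ⟨hHadj, hysub' k hk⟩
    have ha1 : (a : ℕ) ≤ 1 := by
      by_contra h01
      push_neg at h01
      have hq' : q ≤ N.ncard := by
        refine le_trans ?_ (Set.ncard_le_ncard_of_injOn
          (s := (Set.univ : Set (Fin q))) (fun m => ψ (a.succAbove m)) ?_ ?_ (Set.toFinite _))
        · rw [Set.ncard_univ, Nat.card_eq_fintype_card, Fintype.card_fin]
        · intro m _
          refine hkN _ (Fin.succAbove_ne a m) ?_
          omega
        · intro m _ m' _ h
          exact Fin.succAbove_right_injective (hψinj h)
      omega
    have ha'lt : 1 - (a : ℕ) < q + 1 := by omega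
    set a' : Fin (q+1) := ⟨1 - (a : ℕ), ha'lt⟩ with ha'def
    have ha'v : (a' : ℕ) = 1 - (a : ℕ) := rfl
    have haa' : a ≠ a' := by
      intro h
      have h2 := congrArg Fin.val h
      omega
    have hTsub : ∀ k : Fin (q+1), 2 ≤ (k : ℕ) → ψ k ∈ N := by
      intro k hk
      refine hkN k ?_ ?_
      · intro h
        rw [h] at hk
        omega
      · omega
    have hNlb : q - 1 ≤ N.ncard := by
      refine le_trans ?_ (Set.ncard_le_ncard_of_injOn
        (s := (Set.univ : Set (Fin (q-1))))
        (fun m => ψ ⟨(m : ℕ) + 2, by omega⟩) ?_ ?_ (Set.toFinite _))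
      · rw [Set.ncard_univ, Nat.card_eq_fintype_card, Fintype.card_fin]
      · intro m _
        exact hTsub _ (by omega : 2 ≤ (m : ℕ) + 2)
      · intro m _ m' _ h
        have h2 := hψinj h
        have hval : (m : ℕ) + 2 = (m' : ℕ) + 2 := congrArg Fin.val h2
        exact Fin.ext (by omega)
    have hTN : N = ψ '' {k : Fin (q+1) | 2 ≤ (k : ℕ)} := by
      refine (Set.eq_of_subset_of_ncard_le ?_ ?_ (Set.toFinite _)).symm
      · rintro x ⟨k, hk, rfl⟩
        exact hTsub k hk
      · have himg : q - 1 ≤ (ψ '' {k : Fin (q+1) | 2 ≤ (k : ℕ)}).ncard := by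
          refine le_trans ?_ (Set.ncard_le_ncard_of_injOn
            (s := (Set.univ : Set (Fin (q-1))))
            (fun m => ψ ⟨(m : ℕ) + 2, by omega⟩) ?_ ?_ (Set.toFinite _))
          · rw [Set.ncard_univ, Nat.card_eq_fintype_card, Fintype.card_fin]
          · intro m _
            exact ⟨⟨(m : ℕ) + 2, by omega⟩, (by omega : 2 ≤ (m : ℕ) + 2), rfl⟩
          · intro m _ m' _ h
            have h2 := hψinj h
            have hval : (m : ℕ) + 2 = (m' : ℕ) + 2 := congrArg Fin.val h2
            exact Fin.ext (by omega)
        omega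
    refine ⟨ψ a', ⟨?_, ?_, ?_, ?_⟩, ?_, ?_, hNlb, ?_⟩
    · exact hysub' a' (fun h => haa' h.symm)
    · rw [hTN]
      rintro ⟨k, hk, hzk⟩
      have h2 : k = a' := hψinj hzk
      have hk' : 2 ≤ (k : ℕ) := hk
      rw [h2, ha'v] at hk'
      omega
    · intro h
      exact haa' ((hψinj (h.trans ha.symm)).symm)
    · rw [hTN]
      rintro u ⟨k, hk, rfl⟩
      have hk' : 2 ≤ (k : ℕ) := hk
      refine D.adj_sub ((hψadj a' k).2 ⟨?_, ?_⟩)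
      · intro h
        rw [← h, ha'v] at hk'
        omega
      · show ¬((a' : ℕ) + (k : ℕ) = 1)
        rw [ha'v]
        omega
    · rw [hrange, hTN]
      ext x
      simp only [Set.mem_insert_iff, Set.mem_range, Set.mem_image, Set.mem_setOf_eq]
      constructor
      · rintro ⟨j, rfl⟩
        rcases Nat.lt_or_ge (j : ℕ) 2 with hj | hj
        · have hja : j = a ∨ j = a' := by
            have hja' : (j : ℕ) = (a : ℕ) ∨ (j : ℕ) = (a' : ℕ) := by rw [ha'v]; omega
            rcases hja' with h | h
            · exact Or.inl (Fin.ext h)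
            · exact Or.inr (Fin.ext h)
          rcases hja with rfl | rfl
          · exact Or.inl ha
          · exact Or.inr (Or.inl rfl)
        · exact Or.inr (Or.inr ⟨j, hj, rfl⟩)
      · rintro (rfl | rfl | ⟨k, hk, rfl⟩)
        · exact ⟨a, ha⟩
        · exact ⟨a', rfl⟩
        · exact ⟨k, rfl⟩
    · rw [hTN]
      rintro u1 ⟨k1, hk1, rfl⟩ u2 ⟨k2, hk2, rfl⟩ hne12
      have hk1' : 2 ≤ (k1 : ℕ) := hk1
      have hk2' : 2 ≤ (k2 : ℕ) := hk2
      exact D.adj_sub ((hψadj k1 k2).2 ⟨fun h => hne12 (congrArg ψ h), by omega⟩)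
    · intro x x'
      constructor
      · intro hadj
        have hx : x ∈ D.verts := D.edge_vert hadj
        have hx' : x' ∈ D.verts := D.edge_vert hadj.symm
        have hx2 := hx
        have hx2' := hx'
        rw [hrange] at hx2 hx2'
        obtain ⟨j, rfl⟩ := hx2
        obtain ⟨k, rfl⟩ := hx2'
        obtain ⟨hjk, hsum⟩ := (hψadj j k).1 hadj
        refine ⟨hx, hx', fun h => hjk (hψinj h), ?_, ?_⟩
        · rintro ⟨h1, h2⟩
          have hj : j = a := hψinj (h1.trans ha.symm)
          have hk2 : k = a' := hψinj h2
          rw [hj, hk2, ha'v] at hsum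
          omega
        · rintro ⟨h1, h2⟩
          have hj : j = a' := hψinj h1
          have hk2 : k = a := hψinj (h2.trans ha.symm)
          rw [hj, hk2, ha'v] at hsum
          omega
      · rintro ⟨hx, hx', hne', hp1, hp2⟩
        rw [hrange] at hx hx'
        obtain ⟨j, rfl⟩ := hx
        obtain ⟨k, rfl⟩ := hx'
        refine (hψadj j k).2 ⟨fun h => hne' (congrArg ψ h), ?_⟩
        intro hsum
        have hja := j.isLt
        have hka := k.isLt
        have hcases : (j = a ∧ k = a') ∨ (j = a' ∧ k = a) := by
          by_cases hja' : (j : ℕ) = (a : ℕ)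
          · exact Or.inl ⟨Fin.ext hja', Fin.ext (show (k : ℕ) = (a' : ℕ) by rw [ha'v]; omega)⟩
          · exact Or.inr ⟨Fin.ext (show (j : ℕ) = (a' : ℕ) by rw [ha'v]; omega),
              Fin.ext (show (k : ℕ) = (a : ℕ) by omega)⟩
        rcases hcases with ⟨hj1, hk1⟩ | ⟨hj1, hk1⟩
        · exact hp1 ⟨by rw [hj1, ha], by rw [hk1]⟩
        · exact hp2 ⟨by rw [hj1], by rw [hk1, ha]⟩
  set Zs : Set V := {z | (z ∈ ((↑S : Set V)ᶜ \ {w i})) ∧ z ∉ N ∧ z ≠ y ∧ ∀ u ∈ N, H.Adj z u}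
    with hZsdef
  set zf : H.Subgraph → V := fun D =>
    if h : D.verts ⊆ ((↑S' : Set V))ᶜ ∧ Nonempty (D.coe ≃g KsubE (q+1)) ∧ y ∈ D.verts
    then (hstruct D h.1 h.2.1 h.2.2).choose else y
    with hzfdef
  have hzf : ∀ D ∈ Ys, (zf D ∈ Zs) ∧ D.verts = insert y (insert (zf D) N) ∧
      (∀ x x', D.Adj x x' ↔ x ∈ D.verts ∧ x' ∈ D.verts ∧ x ≠ x' ∧
        ¬(x = y ∧ x' = zf D) ∧ ¬(x = zf D ∧ x' = y)) := by
    intro D hD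
    have hh : D.verts ⊆ ((↑S' : Set V))ᶜ ∧ Nonempty (D.coe ≃g KsubE (q+1)) ∧ y ∈ D.verts :=
      ⟨hD.1.1, hD.1.2, hD.2⟩
    have hzeq : zf D = (hstruct D hh.1 hh.2.1 hh.2.2).choose := by
      rw [hzfdef]
      exact dif_pos hh
    obtain ⟨hz1, hz2, hz3, hz4, hz5⟩ := (hstruct D hh.1 hh.2.1 hh.2.2).choose_spec
    rw [hzeq]
    exact ⟨hz1, hz2, hz5⟩
  have hYZ : Ys.ncard ≤ Zs.ncard := by
    refine Set.ncard_le_ncard_of_injOn zf (fun D hD => (hzf D hD).1) ?_ (Set.toFinite _)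
    intro D1 h1 D2 h2 heq
    obtain ⟨hza, hv1, hc1⟩ := hzf D1 h1
    obtain ⟨hzb, hv2, hc2⟩ := hzf D2 h2
    have hvv : D1.verts = D2.verts := by rw [hv1, hv2, heq]
    refine SimpleGraph.Subgraph.ext hvv ?_
    funext x x'
    have hiff : D1.Adj x x' ↔ D2.Adj x x' := by rw [hc1, hc2, hvv, heq]
    exact propext hiff
  rcases Nat.lt_or_ge Zs.ncard 2 with hZ | hZ
  · -- at most one z : copy counts are equal, contradiction with edge minimality
    have hcopyeq : copiesOffCount H q S' = copiesOffCount H q S := by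
      rw [hsplitS, hsplitS']
      omega
    have hE := hminEdges S' hS'free hS'card hcopyeq
    have he1 : edgesOffCount H S = (edgeIn H ((↑S : Set V)ᶜ)).ncard := induce_edge_ncard H _
    have he2 : edgesOffCount H S' = (edgeIn H ((↑S' : Set V)ᶜ)).ncard := induce_edge_ncard H _
    rw [he1, he2] at hE
    have hQv : q ≤ (H.neighborSet (w i) ∩ (((↑S : Set V)ᶜ) \ {w i})).ncard := by
      refine le_trans ?_ (Set.ncard_le_ncard_of_injOn
        (s := (Set.univ : Set (Fin q))) (fun m => w (i.succAbove m)) ?_ ?_ (Set.toFinite _))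
      · rw [Set.ncard_univ, Nat.card_eq_fintype_card, Fintype.card_fin]
      · intro m _
        have hne' : i.succAbove m ≠ i := Fin.succAbove_ne i m
        have hwne : w (i.succAbove m) ≠ w i := fun h => hne' (hwinj h)
        refine ⟨?_, by simpa using hwS (i.succAbove m), hwne⟩
        show H.Adj (w i) (w (i.succAbove m))
        have hlt := (i.succAbove m).isLt
        have hval : ((i.succAbove m : Fin (q+1)) : ℕ) ≤ q - 2 ∨
            ((i.succAbove m : Fin (q+1)) : ℕ) = q - 1 ∨
            ((i.succAbove m : Fin (q+1)) : ℕ) = q := by omega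
        rcases hval with hv | hv | hv
        · exact hB i _ hi hv (fun h => hne' h.symm)
        · have heq2 : i.succAbove m = ⟨q - 1, by omega⟩ := Fin.ext hv
          rw [heq2]
          exact (hB' i hi).1
        · have heq2 : i.succAbove m = ⟨q, by omega⟩ := Fin.ext hv
          rw [heq2]
          exact (hB' i hi).2
      · intro m _ m' _ h
        exact Fin.succAbove_right_injective (hwinj h)
    have hsplitE1 : (edgeIn H ((↑S : Set V)ᶜ)).ncard
        = (edgeIn H (((↑S : Set V)ᶜ) \ {w i})).ncard
          + (H.neighborSet (w i) ∩ (((↑S : Set V)ᶜ) \ {w i})).ncard :=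
      edgeIn_split H _ (w i) (by simpa using hviS)
    have hyS'c : y ∈ ((↑S' : Set V))ᶜ := hyS'
    have hsplitE2 : (edgeIn H ((↑S' : Set V)ᶜ)).ncard
        = (edgeIn H (((↑S' : Set V)ᶜ) \ {y})).ncard
          + (H.neighborSet y ∩ (((↑S' : Set V)ᶜ) \ {y})).ncard :=
      edgeIn_split H _ y hyS'c
    rw [hS'cy] at hsplitE2
    rw [← hNdef] at hsplitE2
    omega
  · -- at least two z's : contradiction with maximality of S
    obtain ⟨zD, hzDZ, hvD, hcliqueD, hNlbD, hcharD⟩ := hstruct D₁ hD₁.1.1 hD₁.1.2 hD₁.2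
    obtain ⟨z1, hz1⟩ : Zs.Nonempty := by
      rw [← Set.ncard_pos (Set.toFinite _)]
      omega
    obtain ⟨z2, hz2⟩ : (Zs \ {z1}).Nonempty := by
      rw [← Set.ncard_pos (Set.toFinite _)]
      rw [Set.ncard_diff_singleton_of_mem hz1]
      omega
    have hz2Z : z2 ∈ Zs := hz2.1
    have hz12 : z2 ≠ z1 := hz2.2
    obtain ⟨u, huN⟩ : N.Nonempty := by
      rw [← Set.ncard_pos (Set.toFinite _)]
      omega
    have huadjy : H.Adj u y := (huN.1 : H.Adj y u).symm
    have huS : u ∈ ((↑S : Set V)ᶜ \ {w i}) := huN.2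
    have hS'sub : (↑S' : Set V) ⊆ (↑S : Set V) ∪ {w i} := by
      intro x hx
      simp only [hS'def, Finset.coe_insert, Set.mem_insert_iff, Finset.coe_erase,
        Set.mem_diff, Finset.mem_coe] at hx
      simp only [Set.mem_union, Set.mem_singleton_iff, Finset.mem_coe]
      tauto
    have hnotS' : ∀ x, x ∈ ((↑S : Set V)ᶜ \ {w i}) → x ∉ (↑S' : Set V) := by
      intro x hx hx'
      rcases hS'sub hx' with h | h
      · exact hx.1 h
      · exact hx.2 h
    -- the four disjoint neighbor sets of u
    have hsub4 : ((H.neighborSet u ∩ (↑S' : Set V)) ∪ ({y} ∪ ((N \ {u}) ∪ {z1, z2})))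
        ⊆ H.neighborSet u := by
      rintro x (hx | hx | hx | hx)
      · exact hx.1
      · rcases hx with rfl
        exact huadjy
      · exact hcliqueD u huN x hx.1 (fun h => hx.2 h.symm)
      · rcases hx with rfl | rfl
        · exact (hz1.2.2.2 u huN).symm
        · exact (hz2Z.2.2.2 u huN).symm
    have hd34 : Disjoint (N \ {u}) ({z1, z2} : Set V) := by
      rw [Set.disjoint_right]
      rintro x (rfl | rfl)
      · exact fun hx => hz1.2.1 hx.1
      · exact fun hx => hz2Z.2.1 hx.1
    have hyN : y ∉ N := by
      intro hyN'
      exact hyN'.2.1 hyS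
    have hd234 : Disjoint ({y} : Set V) ((N \ {u}) ∪ ({z1, z2} : Set V)) := by
      rw [Set.disjoint_left]
      rintro x rfl
      rintro (hx | hx)
      · exact hyN hx.1
      · rcases hx with rfl | rfl
        · exact hz1.2.2.1 rfl
        · exact hz2Z.2.2.1 rfl
    have hd1r : Disjoint (H.neighborSet u ∩ (↑S' : Set V))
        (({y} : Set V) ∪ ((N \ {u}) ∪ ({z1, z2} : Set V))) := by
      rw [Set.disjoint_left]
      rintro x ⟨-, hxS'⟩
      rintro (rfl | hx | hx)
      · exact hyS' hxS'
      · exact hnotS' x hx.1.2 hxS'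
      · rcases hx with rfl | rfl
        · exact hnotS' x hz1.1 hxS'
        · exact hnotS' x hz2Z.1 hxS'
    have hcard4 : (H.neighborSet u ∩ (↑S' : Set V)).ncard + (1 + ((N.ncard - 1) + 2))
        ≤ H.degree u := by
      have hle := Set.ncard_le_ncard hsub4 (Set.toFinite _)
      rw [Set.ncard_union_eq hd1r (Set.toFinite _) (Set.toFinite _),
        Set.ncard_union_eq hd234 (Set.toFinite _) (Set.toFinite _),
        Set.ncard_union_eq hd34 (Set.toFinite _) (Set.toFinite _),
        Set.ncard_singleton, Set.ncard_pair hz12.symm,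
        Set.ncard_diff_singleton_of_mem huN] at hle
      rw [← ncard_nbr H u]
      omega
    have hdegu : H.degree u ≤ d := hd ▸ H.degree_le_maxDegree u
    have hA1 : (H.neighborSet u ∩ (↑S' : Set V)).ncard + 1 ≤ p - 1 := by omega
    have huS' : u ∉ (↑S' : Set V) := hnotS' u huS
    have hWcard : (insert u S').card = S.card + 1 := by
      rw [Finset.card_insert_of_notMem (by simpa using huS'), hS'card]
    have hWfree : ¬ Contains (H.induce (↑(insert u S') : Set V)) R := by
      rintro ⟨f, hfinj⟩
      by_cases hcase : ∀ b, (↑(f b) : V) ≠ u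
      · apply hS'free
        refine contains_of_forall_mem f hfinj ?_
        intro b
        have hb := (f b).2
        simp only [Finset.coe_insert, Set.mem_insert_iff] at hb
        rcases hb with hb | hb
        · exact absurd hb (hcase b)
        · exact hb
      · push_neg at hcase
        obtain ⟨b₀, hb₀⟩ := hcase
        have hdegb : p - 1 ≤ (H.neighborSet u ∩ (↑S' : Set V)).ncard := by
          refine le_trans (le_trans hδR (R.minDegree_le_degree b₀)) ?_
          rw [← ncard_nbr R b₀]
          refine Set.ncard_le_ncard_of_injOn (fun c => (↑(f c) : V)) ?_ ?_ (Set.toFinite _)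
          · intro c hc
            have hadj : (H.induce (↑(insert u S') : Set V)).Adj (f b₀) (f c) := f.map_adj hc
            have hH : H.Adj u (↑(f c) : V) := by
              have hadj' : H.Adj (↑(f b₀) : V) (↑(f c) : V) := hadj
              rwa [hb₀] at hadj'
            refine ⟨hH, ?_⟩
            have hmem := (f c).2
            simp only [Finset.coe_insert, Set.mem_insert_iff] at hmem
            rcases hmem with hm | hm
            · exfalso
              rw [hm] at hH
              exact H.irrefl hH
            · exact hm
          · intro c _ c' _ hcc
            exact hfinj (Subtype.ext hcc)
        omega
    have hfin := hSmax (insert u S') hWfree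
    omega
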